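/- arXiv:2107.05766 — 2 statements merged into one kernel-verified Lean document; each statement's English description precedes it below -/
import Mathlib

section
/- Let $A, \widehat A \in \mathbb{R}^{p \times K}$, let $s \in [K]$, and define the restricted $\ell_1 \to \ell_1$ condition number $\kappa(A,s) = \min_{S \subseteq [K], |S| \le s} \min_{v \in \mathcal{C}(S)} \|Av\|_1/\|v\|_1$, where $\mathcal{C}(S) = \{v \ne 0 : \|v_S\|_1 \ge \|v_{S^c}\|_1\}$. Then $\kappa(\widehat A, s) \ge \kappa(A, s) - \|\widehat A - A\|_{1,\infty}$, where $\|M\|_{1,\infty} = \max_{k} \|M_{\cdot k}\|_1$ is the maximum column $\ell_1$ norm. -/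
open Finset

/-- the restricted ℓ₁→ℓ₁ condition number satisfies
`κ(Â,s) ≥ κ(A,s) − ‖Â − A‖_{1,∞}`. -/
theorem kappa_perturbation {p K : ℕ} (hK : 0 < K) (s : ℕ) (hs : 1 ≤ s) (hsK : s ≤ K)
    (A Ah : Matrix (Fin p) (Fin K) ℝ)
    (κA κAh nrm : ℝ)
    (hκA : κA = sInf {y | ∃ S : Finset (Fin K), S.card ≤ s ∧ ∃ v : Fin K → ℝ, v ≠ 0 ∧
        (∑ k ∈ Sᶜ, |v k|) ≤ (∑ k ∈ S, |v k|) ∧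
        y = (∑ j, |∑ k, A j k * v k|) / (∑ k, |v k|)})
    (hκAh : κAh = sInf {y | ∃ S : Finset (Fin K), S.card ≤ s ∧ ∃ v : Fin K → ℝ, v ≠ 0 ∧
        (∑ k ∈ Sᶜ, |v k|) ≤ (∑ k ∈ S, |v k|) ∧
        y = (∑ j, |∑ k, Ah j k * v k|) / (∑ k, |v k|)})
    (hnrm : nrm = ⨆ k : Fin K, ∑ j, |Ah j k - A j k|) :
    κAh ≥ κA - nrm := by
  haveI : NeZero K := ⟨hK.ne'⟩
  set SA := {y | ∃ S : Finset (Fin K), S.card ≤ s ∧ ∃ v : Fin K → ℝ, v ≠ 0 ∧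
        (∑ k ∈ Sᶜ, |v k|) ≤ (∑ k ∈ S, |v k|) ∧
        y = (∑ j, |∑ k, A j k * v k|) / (∑ k, |v k|)} with hSA
  set SAh := {y | ∃ S : Finset (Fin K), S.card ≤ s ∧ ∃ v : Fin K → ℝ, v ≠ 0 ∧
        (∑ k ∈ Sᶜ, |v k|) ≤ (∑ k ∈ S, |v k|) ∧
        y = (∑ j, |∑ k, Ah j k * v k|) / (∑ k, |v k|)} with hSAh
  -- nonemptiness witness data
  have hwit : ∀ B : Matrix (Fin p) (Fin K) ℝ, ∃ S : Finset (Fin K), S.card ≤ s ∧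
      ∃ v : Fin K → ℝ, v ≠ 0 ∧ (∑ k ∈ Sᶜ, |v k|) ≤ (∑ k ∈ S, |v k|) ∧
      ((∑ j, |∑ k, B j k * v k|) / (∑ k, |v k|)) =
        (∑ j, |∑ k, B j k * v k|) / (∑ k, |v k|) := by
    intro B
    refine ⟨{0}, by simpa using hs, (fun k => if k = 0 then (1:ℝ) else 0), ?_, ?_, rfl⟩
    · intro h
      have := congrFun h 0
      simp at this
    · have h1 : (∑ k ∈ ({0} : Finset (Fin K)), |if k = 0 then (1:ℝ) else 0|) = 1 := by simp
      have h2 : (∑ k ∈ ({0} : Finset (Fin K))ᶜ, |if k = 0 then (1:ℝ) else 0|) = 0 := by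
        apply Finset.sum_eq_zero
        intro k hk
        simp only [Finset.mem_compl, Finset.mem_singleton] at hk
        simp [hk]
      rw [h1, h2]; norm_num
  have hneA : SA.Nonempty := by
    obtain ⟨S, hS, v, hv, hc, _⟩ := hwit A
    exact ⟨_, ⟨S, hS, v, hv, hc, rfl⟩⟩
  have hbddA : ∀ y ∈ SA, (0:ℝ) ≤ y := by
    rintro y ⟨S, hS, v, hv, hc, rfl⟩
    apply div_nonneg
    · exact Finset.sum_nonneg fun j _ => abs_nonneg _
    · exact Finset.sum_nonneg fun k _ => abs_nonneg _
  have hneAh : SAh.Nonempty := by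
    obtain ⟨S, hS, v, hv, hc, _⟩ := hwit Ah
    exact ⟨_, ⟨S, hS, v, hv, hc, rfl⟩⟩
  rw [ge_iff_le, hκAh]
  apply le_csInf hneAh
  rintro y ⟨S, hS, v, hv, hc, rfl⟩
  rw [sub_le_iff_le_add]
  -- ‖v‖₁ > 0
  have hvpos : 0 < ∑ k, |v k| := by
    obtain ⟨k0, hk0⟩ := Function.ne_iff.mp hv
    apply Finset.sum_pos' (fun k _ => abs_nonneg _)
    exact ⟨k0, Finset.mem_univ _, abs_pos.mpr (by simpa using hk0)⟩
  -- column norm bound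
  have hcol : ∀ k : Fin K, (∑ j, |Ah j k - A j k|) ≤ nrm := by
    intro k
    rw [hnrm]
    exact le_ciSup (f := fun k : Fin K => ∑ j, |Ah j k - A j k|) (Set.Finite.bddAbove (Set.finite_range _)) k
  -- key inequality
  have hkey : (∑ j, |∑ k, A j k * v k|) ≤
      (∑ j, |∑ k, Ah j k * v k|) + nrm * ∑ k, |v k| := by
    have h1 : ∀ j, |∑ k, A j k * v k| ≤
        |∑ k, Ah j k * v k| + ∑ k, |Ah j k - A j k| * |v k| := by
      intro j
      have : (∑ k, A j k * v k) = (∑ k, Ah j k * v k) - ∑ k, (Ah j k - A j k) * v k := by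
        rw [← Finset.sum_sub_distrib]; congr 1; ext k; ring
      rw [this]
      calc |(∑ k, Ah j k * v k) - ∑ k, (Ah j k - A j k) * v k|
          ≤ |∑ k, Ah j k * v k| + |∑ k, (Ah j k - A j k) * v k| := abs_sub _ _
        _ ≤ |∑ k, Ah j k * v k| + ∑ k, |Ah j k - A j k| * |v k| := by
            gcongr
            calc |∑ k, (Ah j k - A j k) * v k| ≤ ∑ k, |(Ah j k - A j k) * v k| :=
                  Finset.abs_sum_le_sum_abs _ _
              _ = ∑ k, |Ah j k - A j k| * |v k| := by simp [abs_mul]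
    calc (∑ j, |∑ k, A j k * v k|)
        ≤ ∑ j, (|∑ k, Ah j k * v k| + ∑ k, |Ah j k - A j k| * |v k|) :=
          Finset.sum_le_sum fun j _ => h1 j
      _ = (∑ j, |∑ k, Ah j k * v k|) + ∑ k, (∑ j, |Ah j k - A j k|) * |v k| := by
          rw [Finset.sum_add_distrib, Finset.sum_comm]
          simp [Finset.sum_mul]
      _ ≤ (∑ j, |∑ k, Ah j k * v k|) + ∑ k, nrm * |v k| := by
          exact add_le_add_right (Finset.sum_le_sum fun k _ =>
            mul_le_mul_of_nonneg_right (hcol k) (abs_nonneg _)) _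
      _ = (∑ j, |∑ k, Ah j k * v k|) + nrm * ∑ k, |v k| := by rw [Finset.mul_sum]
  -- κA ≤ element of SA with same S, v
  have hκAle : κA ≤ (∑ j, |∑ k, A j k * v k|) / (∑ k, |v k|) := by
    rw [hκA]
    exact csInf_le ⟨0, hbddA⟩ ⟨S, hS, v, hv, hc, rfl⟩
  calc κA ≤ (∑ j, |∑ k, A j k * v k|) / (∑ k, |v k|) := hκAle
    _ ≤ ((∑ j, |∑ k, Ah j k * v k|) + nrm * ∑ k, |v k|) / (∑ k, |v k|) := by
        gcongr
    _ = (∑ j, |∑ k, Ah j k * v k|) / (∑ k, |v k|) + nrm := by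
        rw [add_div, mul_div_assoc, div_self hvpos.ne', mul_one]
end

section
/- Let $A \in \mathbb{R}^{p \times K}$, $\Pi_j > 0$ for $j \in \overline{J}$ with $\sum_{j \in \overline{J}} \Pi_j = 1$, and let $H = \sum_{j \in \overline{J}} \Pi_j^{-1} A_{j\cdot} A_{j\cdot}^\top$ be invertible with $\kappa := \min_{v \ne 0} \|A_{\overline{J}} v\|_1 / \|v\|_1 > 0$. Then for every $u \in \mathbb{R}^K$, $\|H^{-1/2} u\|_1 \le \kappa^{-1} \|u\|_2$. -/
open Finset Matrix

/-- `‖H^{-1/2} u‖₁ ≤ κ⁻¹ ‖u‖₂` where `H = ∑_{j∈J̄} Π_j⁻¹ A_{j·}A_{j·}^⊤`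
is invertible, `R` is its positive definite square root and
`κ = min_{v ≠ 0} ‖A_{J̄} v‖₁/‖v‖₁ > 0`. -/
theorem inv_sqrt_l1_bound {p K : ℕ} (A : Matrix (Fin p) (Fin K) ℝ)
    (Pi : Fin p → ℝ) (Jbar : Finset (Fin p))
    (hPipos : ∀ j ∈ Jbar, 0 < Pi j) (hPi1 : ∑ j ∈ Jbar, Pi j = 1)
    (H : Matrix (Fin K) (Fin K) ℝ)
    (hH : ∀ k l, H k l = ∑ j ∈ Jbar, A j k * A j l / Pi j)
    (hHinv : IsUnit H.det)
    (κ : ℝ)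
    (hκ : κ = sInf {y | ∃ v : Fin K → ℝ, v ≠ 0 ∧
        y = (∑ j ∈ Jbar, |∑ k, A j k * v k|) / (∑ k, |v k|)})
    (hκpos : 0 < κ)
    (R : Matrix (Fin K) (Fin K) ℝ) (hR : R.PosDef) (hRR : R * R = H)
    (u : Fin K → ℝ) :
    ∑ k, |(R⁻¹ *ᵥ u) k| ≤ κ⁻¹ * Real.sqrt (∑ k, (u k) ^ 2) := by
  set w : Fin K → ℝ := R⁻¹ *ᵥ u with hw
  have hRdet : IsUnit R.det := isUnit_iff_ne_zero.mpr hR.det_pos.ne'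
  have hRw : R *ᵥ w = u := by
    rw [hw, Matrix.mulVec_mulVec, Matrix.mul_nonsing_inv R hRdet, Matrix.one_mulVec]
  have hsqrt_nonneg : (0:ℝ) ≤ Real.sqrt (∑ k, (u k) ^ 2) := Real.sqrt_nonneg _
  have hRHS : (0:ℝ) ≤ κ⁻¹ * Real.sqrt (∑ k, (u k) ^ 2) :=
    mul_nonneg (inv_nonneg.mpr hκpos.le) hsqrt_nonneg
  by_cases hw0 : w = 0
  · simpa [hw0] using hRHS
  have hsymm : Rᵀ = R := by
    have h := hR.isHermitian.eq
    simpa using h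
  -- the quadratic form value equals ‖u‖₂²
  have hq : ∑ j ∈ Jbar, (∑ k, A j k * w k) ^ 2 / Pi j = ∑ k, (u k) ^ 2 := by
    have key : ∑ j ∈ Jbar, (∑ k, A j k * w k) ^ 2 / Pi j
        = ∑ k, w k * (H *ᵥ w) k := by
      calc ∑ j ∈ Jbar, (∑ k, A j k * w k) ^ 2 / Pi j
          = ∑ j ∈ Jbar, ∑ k, ∑ l, w k * (A j k * A j l / Pi j) * w l := by
            refine Finset.sum_congr rfl fun j hj => ?_
            rw [sq, Finset.sum_mul_sum, Finset.sum_div]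
            refine Finset.sum_congr rfl fun k _ => ?_
            rw [Finset.sum_div]
            refine Finset.sum_congr rfl fun l _ => ?_
            ring
        _ = ∑ k, ∑ l, w k * (∑ j ∈ Jbar, A j k * A j l / Pi j) * w l := by
            rw [Finset.sum_comm]
            refine Finset.sum_congr rfl fun k _ => ?_
            rw [Finset.sum_comm]
            refine Finset.sum_congr rfl fun l _ => ?_
            rw [Finset.mul_sum, Finset.sum_mul]
        _ = ∑ k, w k * (H *ᵥ w) k := by
            simp only [Matrix.mulVec, dotProduct, hH, Finset.mul_sum,
              Finset.sum_mul, div_eq_mul_inv]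
            exact Finset.sum_congr rfl fun k _ => Finset.sum_congr rfl fun l _ =>
              Finset.sum_congr rfl fun j _ => by ring
    have hHu : H *ᵥ w = R *ᵥ u := by
      rw [← hRR, ← Matrix.mulVec_mulVec, hRw]
    rw [key, hHu]
    calc ∑ k, w k * (R *ᵥ u) k = w ⬝ᵥ (R *ᵥ u) := rfl
      _ = (w ᵥ* R) ⬝ᵥ u := Matrix.dotProduct_mulVec w R u
      _ = (R *ᵥ w) ⬝ᵥ u := by rw [← Matrix.mulVec_transpose, hsymm]
      _ = u ⬝ᵥ u := by rw [hRw]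
      _ = ∑ k, (u k) ^ 2 := by simp [dotProduct, sq]
  have hqnn : (0:ℝ) ≤ ∑ k, (u k) ^ 2 := Finset.sum_nonneg fun k _ => sq_nonneg _
  -- Cauchy-Schwarz: (∑_j |A_j·w|)² ≤ ∑ u²
  have hCS : (∑ j ∈ Jbar, |∑ k, A j k * w k|) ^ 2 ≤ ∑ k, (u k) ^ 2 := by
    have h := Finset.sum_mul_sq_le_sq_mul_sq Jbar (fun j => Real.sqrt (Pi j))
      (fun j => |∑ k, A j k * w k| / Real.sqrt (Pi j))
    have h1 : ∀ j ∈ Jbar, Real.sqrt (Pi j) * (|∑ k, A j k * w k| / Real.sqrt (Pi j))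
        = |∑ k, A j k * w k| := fun j hj => by
      rw [mul_comm, div_mul_cancel₀ _ (Real.sqrt_ne_zero'.mpr (hPipos j hj))]
    have h2 : ∀ j ∈ Jbar, (Real.sqrt (Pi j)) ^ 2 = Pi j := fun j hj =>
      Real.sq_sqrt (hPipos j hj).le
    have h3 : ∀ j ∈ Jbar, (|∑ k, A j k * w k| / Real.sqrt (Pi j)) ^ 2
        = (∑ k, A j k * w k) ^ 2 / Pi j := fun j hj => by
      rw [div_pow, sq_abs, Real.sq_sqrt (hPipos j hj).le]
    rw [Finset.sum_congr rfl h1, Finset.sum_congr rfl h2, Finset.sum_congr rfl h3,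
      hPi1, one_mul, hq] at h
    exact h
  have hS_nonneg : (0:ℝ) ≤ ∑ j ∈ Jbar, |∑ k, A j k * w k| :=
    Finset.sum_nonneg fun j _ => abs_nonneg _
  have hS_le : ∑ j ∈ Jbar, |∑ k, A j k * w k| ≤ Real.sqrt (∑ k, (u k) ^ 2) :=
    (Real.le_sqrt hS_nonneg hqnn).mpr hCS
  -- κ bound
  have hT_pos : 0 < ∑ k, |w k| := by
    obtain ⟨k, hk⟩ := Function.ne_iff.mp hw0
    exact Finset.sum_pos' (fun k _ => abs_nonneg _)
      ⟨k, Finset.mem_univ k, abs_pos.mpr hk⟩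
  have hκle : κ ≤ (∑ j ∈ Jbar, |∑ k, A j k * w k|) / (∑ k, |w k|) := by
    rw [hκ]
    refine csInf_le ⟨0, fun y hy => ?_⟩ ⟨w, hw0, rfl⟩
    obtain ⟨v, hv, rfl⟩ := hy
    exact div_nonneg (Finset.sum_nonneg fun j _ => abs_nonneg _)
      (Finset.sum_nonneg fun k _ => abs_nonneg _)
  have hκT : κ * (∑ k, |w k|) ≤ ∑ j ∈ Jbar, |∑ k, A j k * w k| := by
    rw [← le_div_iff₀ hT_pos] at *
    exact hκle
  have : κ * (∑ k, |w k|) ≤ Real.sqrt (∑ k, (u k) ^ 2) := hκT.trans hS_le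
  calc ∑ k, |w k| = κ⁻¹ * (κ * ∑ k, |w k|) := by
        field_simp
    _ ≤ κ⁻¹ * Real.sqrt (∑ k, (u k) ^ 2) :=
        mul_le_mul_of_nonneg_left this (inv_nonneg.mpr hκpos.le)
end
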